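/- Let G = (V,E) be a periodic graph with free ℤ^d-action, finite orbit set V_0 = {v_1,...,v_m} of representatives, and finitely many edge orbits. Define the NFA A over ℤ^{d+1} with states V_0, one transition v_s → v_t labeled (x, 1) for each edge orbit whose representative edge goes from v_s to x·v_t, plus a self-loop at each state labeled (0,...,0,1); initial state v_0 ∈ V_0, final state v_i. Then (x_1,...,x_d,y) ∈ Ψ(A) if and only if there exists a path in G from v_0 to (x_1,...,x_d)·v_i of length at most y. -/

import Mathlib

lemma snoc_add' {d : ℕ} (a b : Fin d → ℤ) (c e : ℤ) :
    (Fin.snoc a c : Fin (d+1) → ℤ) + Fin.snoc b e = Fin.snoc (a + b) (c + e) := by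
  funext i
  refine Fin.lastCases ?_ ?_ i <;> simp

lemma snoc_zero' {d : ℕ} : (Fin.snoc (0 : Fin d → ℤ) (0 : ℤ) : Fin (d+1) → ℤ) = 0 := by
  funext i
  refine Fin.lastCases ?_ ?_ i <;> simp

lemma nsmul_snoc {d : ℕ} (n : ℕ) :
    n • (Fin.snoc (0 : Fin d → ℤ) (1 : ℤ) : Fin (d+1) → ℤ) = Fin.snoc (0 : Fin d → ℤ) (n : ℤ) := by
  funext i
  refine Fin.lastCases ?_ ?_ i <;> simp

lemma sum_map_ones {α : Type*} (l : List α) (f : α → ℤ) (h : ∀ a ∈ l, f a = 1) :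
    (l.map f).sum = l.length := by
  induction l with
  | nil => simp
  | cons a l ih =>
    simp only [List.map_cons, List.sum_cons, List.length_cons,
      h a (by simp), ih (fun b hb => h b (by simp [hb]))]
    push_cast
    ring

lemma sum_map_init {d : ℕ} {α : Type*} (l : List α) (f : α → (Fin (d+1) → ℤ)) :
    (l.map (fun a => Fin.init (f a))).sum = Fin.init (l.map f).sum := by
  induction l with
  | nil => rfl
  | cons a l ih => simp only [List.map_cons, List.sum_cons, ih]; rfl

lemma sum_apply_last {d : ℕ} {α : Type*} (l : List α) (f : α → (Fin (d+1) → ℤ)) :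
    (l.map f).sum (Fin.last d) = (l.map (fun a => f a (Fin.last d))).sum := by
  induction l with
  | nil => rfl
  | cons a l ih => simp only [List.map_cons, List.sum_cons, Pi.add_apply, ih]

/-- An accepting run of an NFA `(Q, I, F, δ)` over ℤ^d, given as a list of
transitions. -/
def IsRun {d : ℕ} {Q : Type*} (I F : Set Q) (δ : Set (Q × (Fin d → ℤ) × Q))
    (r : List (Q × (Fin d → ℤ) × Q)) : Prop :=
  (∀ t ∈ r, t ∈ δ) ∧ r.Chain' (fun s t => s.2.2 = t.1) ∧
  ((r = [] ∧ (I ∩ F).Nonempty) ∨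
    (∃ h l, r.head? = some h ∧ r.getLast? = some l ∧ h.1 ∈ I ∧ l.2.2 ∈ F))

/-- The Parikh image of an NFA over ℤ^d: sums of labels over accepting runs. -/
def ParikhImage {d : ℕ} {Q : Type*} (I F : Set Q) (δ : Set (Q × (Fin d → ℤ) × Q)) :
    Set (Fin d → ℤ) :=
  {v | ∃ r, IsRun I F δ r ∧ (r.map (fun t => t.2.1)).sum = v}

/-- for a periodic graph `G` with orbit representatives `V0`, consider
the NFA over ℤ^{d+1} whose states are `V0`, with a transition `s → t` labelled
`(x, 1)` for each edge orbit going from `s` to `x • t`, plus a self-loop labelled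
`(0, …, 0, 1)` at each state, initial state `v₀` and final state `vᵢ`. Then
`(x, y) ∈ Ψ(A)` iff there is a path in `G` from `v₀` to `x • vᵢ` of length ≤ y. -/
theorem stmt_15 {d : ℕ} {V : Type*} (G : SimpleGraph V)
    [AddAction (Fin d → ℤ) V]
    (hfree : ∀ (g : Fin d → ℤ) (v : V), g +ᵥ v = v → g = 0)
    (hauto : ∀ (g : Fin d → ℤ) (u w : V), G.Adj u w → G.Adj (g +ᵥ u) (g +ᵥ w))
    (V0 : Finset V)
    (hrep : ∀ v : V, ∃ (x : Fin d → ℤ) (s : V), s ∈ V0 ∧ v = x +ᵥ s)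
    (hdistinct : ∀ s ∈ V0, ∀ t ∈ V0, ∀ x : Fin d → ℤ, x +ᵥ s = t → s = t ∧ x = 0)
    (v0 vi : {v : V // v ∈ V0})
    (δ : Set ({v : V // v ∈ V0} × (Fin (d + 1) → ℤ) × {v : V // v ∈ V0}))
    (hδ : ∀ (s t : {v : V // v ∈ V0}) (a : Fin (d + 1) → ℤ),
      (s, a, t) ∈ δ ↔
        ((∃ x : Fin d → ℤ, a = Fin.snoc x 1 ∧ G.Adj s.val (x +ᵥ t.val)) ∨
          (s = t ∧ a = Fin.snoc (0 : Fin d → ℤ) 1)))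
    (x : Fin d → ℤ) (y : ℕ) :
    Fin.snoc x (y : ℤ) ∈ ParikhImage {v0} {vi} δ ↔
      ∃ w : G.Walk v0.val (x +ᵥ vi.val), w.length ≤ y := by
  classical
  -- translating a walk by a group element
  have key0 : ∀ (g : Fin d → ℤ) (u v : V) (w : G.Walk u v),
      ∃ w' : G.Walk (g +ᵥ u) (g +ᵥ v), w'.length = w.length := by
    intro g u v w
    induction w with
    | nil => exact ⟨SimpleGraph.Walk.nil, rfl⟩
    | cons h p ih =>
      obtain ⟨w', hw'⟩ := ih
      exact ⟨SimpleGraph.Walk.cons (hauto g _ _ h) w', by simp [hw']⟩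
  -- key lemma 1: from a nonempty chain of transitions, build a walk
  have key1 : ∀ (r : List ({v : V // v ∈ V0} × (Fin (d + 1) → ℤ) × {v : V // v ∈ V0}))
      (h l : {v : V // v ∈ V0} × (Fin (d + 1) → ℤ) × {v : V // v ∈ V0}),
      r.head? = some h → r.getLast? = some l → (∀ p ∈ r, p ∈ δ) →
      r.Chain' (fun s t => s.2.2 = t.1) →
      ∃ w : G.Walk h.1.val ((r.map (fun p => Fin.init p.2.1)).sum +ᵥ l.2.2.val),
        w.length ≤ r.length := by
    intro r
    induction r with
    | nil => intro h l hh; simp at hh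
    | cons a r ih =>
      intro h l hh hl hmem hchain
      obtain rfl : a = h := by simpa using hh
      rcases r with _ | ⟨b, r'⟩
      · obtain rfl : a = l := by simpa using hl
        rcases (hδ a.1 a.2.2 a.2.1).1 (hmem a (by simp)) with ⟨xa, ha, hadj⟩ | ⟨heq, ha⟩
        · refine ⟨(SimpleGraph.Walk.cons hadj SimpleGraph.Walk.nil).copy rfl ?_, ?_⟩
          · simp [ha, Fin.init_snoc]
          · simp
        · refine ⟨SimpleGraph.Walk.nil.copy rfl ?_, ?_⟩
          · simp [ha, Fin.init_snoc, heq]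
          · simp
      · rw [List.getLast?_cons_cons] at hl
        obtain ⟨hab, hchain'⟩ := List.isChain_cons_cons.mp hchain
        obtain ⟨w', hw'⟩ := ih b l rfl hl (fun p hp => hmem p (by simp [hp])) hchain'
        rcases (hδ a.1 a.2.2 a.2.1).1 (hmem a (by simp)) with ⟨xa, ha, hadj⟩ | ⟨heq, ha⟩
        · have hadj' : G.Adj a.1.val (xa +ᵥ b.1.val) := by rw [← hab]; exact hadj
          obtain ⟨w'', hw''⟩ := key0 xa _ _ w'
          refine ⟨(SimpleGraph.Walk.cons hadj' w'').copy rfl ?_, ?_⟩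
          · rw [vadd_vadd]
            simp [ha, Fin.init_snoc]
          · simp only [SimpleGraph.Walk.length_copy, SimpleGraph.Walk.length_cons,
              List.length_cons, hw'']
            simp only [List.length_cons] at hw'
            omega
        · have hb : a.1.val = b.1.val := by rw [heq, hab]
          refine ⟨w'.copy hb.symm ?_, ?_⟩
          · simp [ha, Fin.init_snoc]
          · simp only [SimpleGraph.Walk.length_copy, List.length_cons]
            simp only [List.length_cons] at hw'
            omega
  -- key lemma 2: from a walk, build a chain of transitions
  have key2 : ∀ (u v : V) (w : G.Walk u v) (su sv : {v : V // v ∈ V0})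
      (xu xv : Fin d → ℤ), u = xu +ᵥ su.val → v = xv +ᵥ sv.val →
      ∃ r : List ({v : V // v ∈ V0} × (Fin (d + 1) → ℤ) × {v : V // v ∈ V0}),
        (∀ p ∈ r, p ∈ δ) ∧ r.Chain' (fun s t => s.2.2 = t.1) ∧ r.length = w.length ∧
        (r.map (fun p => p.2.1)).sum = Fin.snoc (xv - xu) (w.length : ℤ) ∧
        ((r = [] ∧ su = sv) ∨
          ∃ h l, r.head? = some h ∧ r.getLast? = some l ∧ h.1 = su ∧ l.2.2 = sv) := by
    intro u v w
    induction w with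
    | nil =>
      intro su sv xu xv hu hv
      have h1 : (-xv + xu) +ᵥ su.val = sv.val := by
        rw [← vadd_vadd, ← hu, hv, vadd_vadd, neg_add_cancel, zero_vadd]
      obtain ⟨hsusv, hx0⟩ := hdistinct su.val su.2 sv.val sv.2 _ h1
      have hxx : xv = xu := neg_add_eq_zero.mp hx0
      refine ⟨[], by simp, List.isChain_nil, by simp, ?_, Or.inl ⟨rfl, Subtype.ext hsusv⟩⟩
      simp [hxx, snoc_zero']
    | @cons p q s hadj w ih =>
      intro su sv xu xv hu hv
      obtain ⟨xm, sm', hsm', hm⟩ := hrep q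
      obtain ⟨r', hmem', hchain', hlen', hsum', hend'⟩ := ih ⟨sm', hsm'⟩ sv xm xv hm hv
      have hadj2 : G.Adj su.val ((-xu + xm) +ᵥ sm') := by
        have h2 := hauto (-xu) _ _ hadj
        rw [hu, hm, vadd_vadd, vadd_vadd, neg_add_cancel, zero_vadd] at h2
        exact h2
      have haδ : (su, (Fin.snoc (-xu + xm) 1 : Fin (d+1) → ℤ), (⟨sm', hsm'⟩ : {v : V // v ∈ V0})) ∈ δ :=
        (hδ su ⟨sm', hsm'⟩ _).2 (Or.inl ⟨-xu + xm, rfl, hadj2⟩)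
      refine ⟨(su, (Fin.snoc (-xu + xm) 1 : Fin (d+1) → ℤ), ⟨sm', hsm'⟩) :: r', ?_, ?_, ?_, ?_, ?_⟩
      · intro p hp
        rcases List.mem_cons.mp hp with rfl | hp
        · exact haδ
        · exact hmem' _ hp
      · refine List.isChain_cons.mpr ⟨?_, hchain'⟩
        intro q hq
        rcases hend' with ⟨hrnil, _⟩ | ⟨h', l', hh', hl', hI', hF'⟩
        · rw [hrnil] at hq; simp at hq
        · rw [hh'] at hq
          obtain rfl : h' = q := by simpa using hq
          exact hI'.symm
      · simp [hlen']
      · have e1 : (-xu + xm) + (xv - xm) = xv - xu := by abel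
        have e2 : (1 : ℤ) + (w.length : ℤ) = (((SimpleGraph.Walk.cons hadj w).length : ℕ) : ℤ) := by
          rw [SimpleGraph.Walk.length_cons]
          push_cast
          ring
        rw [List.map_cons, List.sum_cons, hsum', snoc_add', e1, e2]
      · rcases hend' with ⟨hrnil, hmsv⟩ | ⟨h', l', hh', hl', hI', hF'⟩
        · subst hrnil
          exact Or.inr ⟨_, _, rfl, rfl, rfl, hmsv⟩
        · rcases r' with _ | ⟨q', r''⟩
          · simp at hl'
          · refine Or.inr ⟨_, l', rfl, ?_, rfl, hF'⟩
            rw [List.getLast?_cons_cons]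
            exact hl'
  constructor
  · rintro ⟨r, ⟨hmem, hchain, hend⟩, hsum⟩
    have hone : ∀ p ∈ r, p.2.1 (Fin.last d) = 1 := by
      intro p hp
      rcases (hδ p.1 p.2.2 p.2.1).1 (hmem _ hp) with ⟨xa, ha, -⟩ | ⟨-, ha⟩ <;>
        simp [ha]
    have hy : (y : ℤ) = r.length := by
      have h1 := congrFun hsum (Fin.last d)
      rw [sum_apply_last, sum_map_ones _ _ hone] at h1
      rw [h1]
      simp
    have hx : (r.map (fun p => Fin.init p.2.1)).sum = x := by
      rw [sum_map_init, hsum, Fin.init_snoc]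
    rcases hend with ⟨hrnil, hIF⟩ | ⟨h, l, hh, hl, hI, hF⟩
    · subst hrnil
      obtain ⟨q, hq1, hq2⟩ := hIF
      obtain rfl : q = v0 := hq1
      obtain rfl : q = vi := hq2
      have hx0 : x = 0 := by simpa using hx.symm
      have hv : (q : V) = x +ᵥ (q : V) := by rw [hx0, zero_vadd]
      exact ⟨SimpleGraph.Walk.nil.copy rfl hv, by simp⟩
    · obtain ⟨w, hw⟩ := key1 r h l hh hl hmem hchain
      obtain rfl : h.1 = v0 := hI
      obtain rfl : l.2.2 = vi := hF
      refine ⟨w.copy rfl (by rw [hx]), ?_⟩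
      rw [SimpleGraph.Walk.length_copy]
      omega
  · rintro ⟨w, hwlen⟩
    obtain ⟨r, hmem, hchain, hlen, hsum, hend⟩ :=
      key2 _ _ w v0 vi 0 x (zero_vadd _ _).symm rfl
    set n := y - w.length with hn
    set loop : {v : V // v ∈ V0} × (Fin (d + 1) → ℤ) × {v : V // v ∈ V0} :=
      (vi, (Fin.snoc (0 : Fin d → ℤ) 1 : Fin (d+1) → ℤ), vi) with hloop
    have hloopδ : loop ∈ δ := (hδ vi vi _).2 (Or.inr ⟨rfl, rfl⟩)
    have hrepLast : ∀ k : ℕ, (List.replicate (k+1) loop).getLast? = some loop := by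
      intro k
      rw [List.replicate_succ', List.getLast?_append_of_ne_nil _ (by simp)]
      rfl
    refine ⟨r ++ List.replicate n loop, ⟨?_, ?_, ?_⟩, ?_⟩
    · intro p hp
      rcases List.mem_append.mp hp with hp | hp
      · exact hmem _ hp
      · rw [List.eq_of_mem_replicate hp]; exact hloopδ
    · refine List.IsChain.append hchain (List.isChain_replicate_of_rel n rfl) ?_
      intro p hp q hq
      have hq' : q = loop := List.eq_of_mem_replicate (List.mem_of_mem_head? hq)
      rcases hend with ⟨hrnil, _⟩ | ⟨h, l, hh, hl, hI, hF⟩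
      · rw [hrnil] at hp; simp at hp
      · rw [hl] at hp
        obtain rfl : l = p := by simpa using hp
        rw [hq', hF]
    · rcases hend with ⟨hrnil, hsv⟩ | ⟨h, l, hh, hl, hI, hF⟩
      · subst hrnil
        cases n with
        | zero =>
          exact Or.inl ⟨by simp, ⟨v0, rfl, Set.mem_singleton_iff.mpr hsv⟩⟩
        | succ k =>
          refine Or.inr ⟨loop, loop, ?_, ?_, Set.mem_singleton_iff.mpr hsv.symm, rfl⟩
          · rw [List.nil_append, List.replicate_succ]; rfl
          · rw [List.nil_append]; exact hrepLast k
      · have hne : r ≠ [] := by intro h0; rw [h0] at hh; simp at hh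
        cases n with
        | zero =>
          refine Or.inr ⟨h, l, ?_, ?_, by simp [hI], by simp [hF]⟩
          · rw [List.head?_append_of_ne_nil _ hne]; exact hh
          · simp only [List.replicate_zero, List.append_nil]; exact hl
        | succ k =>
          refine Or.inr ⟨h, loop, ?_, ?_, by simp [hI], rfl⟩
          · rw [List.head?_append_of_ne_nil _ hne]; exact hh
          · rw [List.getLast?_append_of_ne_nil _ (by simp)]; exact hrepLast k
    · rw [List.map_append, List.sum_append, hsum, List.map_replicate, List.sum_replicate,
        nsmul_snoc, snoc_add']
      have h2 : (w.length : ℤ) + (n : ℤ) = (y : ℤ) := by omega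
      have h3 : x - 0 + 0 = x := by simp
      rw [h2, h3]
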